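/- Let (Ξ, Ξ^∞) and (Λ, Λ^∞) be countable approximate groups with left-invariant proper metrics d on Ξ^∞ and d' on Λ^∞, and let f₂: Ξ² → Λ² be a 2-local morphism (a partial homomorphism with f₂(Ξ) ⊆ Λ). Then the restriction f₁: (Ξ, d) → (Λ, d') is coarsely Lipschitz. -/
import Mathlib


open Pointwise

/-- An approximate subgroup of a group. -/
def IsApproxSubgroup {G : Type*} [Group G] (A : Set G) : Prop :=
  A⁻¹ = A ∧ (1 : G) ∈ A ∧ ∃ F : Set G, F.Finite ∧ A * A ⊆ A * F

/-- If `f₂ : Ξ² → Λ²` is a 2-local morphism of countable approximate groups, then its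
restriction `f₁ : Ξ → Λ` is coarsely Lipschitz with respect to left-invariant proper
metrics on the enveloping groups. -/
theorem local_morphism_coarsely_lipschitz {G H : Type*} [Group G] [Group H]
    [Countable G] [Countable H]
    (X : Set G) (L : Set H) (hX : IsApproxSubgroup X) (hL : IsApproxSubgroup L)
    (d : G → G → ℝ)
    (hdeq : ∀ x y, d x y = 0 ↔ x = y) (hdsymm : ∀ x y, d x y = d y x)
    (hdtri : ∀ x y z, d x z ≤ d x y + d y z)
    (hdinv : ∀ g x y, d (g * x) (g * y) = d x y)
    (hdproper : ∀ r : ℝ, {g : G | d 1 g ≤ r}.Finite)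
    (d' : H → H → ℝ)
    (hd'eq : ∀ x y, d' x y = 0 ↔ x = y) (hd'symm : ∀ x y, d' x y = d' y x)
    (hd'tri : ∀ x y z, d' x z ≤ d' x y + d' y z)
    (hd'inv : ∀ g x y, d' (g * x) (g * y) = d' x y)
    (hd'proper : ∀ r : ℝ, {h : H | d' 1 h ≤ r}.Finite)
    (f : G → H)
    (hf2 : ∀ x ∈ X * X, f x ∈ L * L)
    (hf1 : ∀ x ∈ X, f x ∈ L)
    (hhom : ∀ a ∈ X * X, ∀ b ∈ X * X, a * b ∈ X * X → f (a * b) = f a * f b) :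
    ∀ r : ℝ, 0 ≤ r → ∃ s : ℝ, ∀ x ∈ X, ∀ y ∈ X, d x y ≤ r → d' (f x) (f y) ≤ s := by
  intro r hr
  obtain ⟨hXinv, hX1, -⟩ := hX
  have h1mem : (1 : G) ∈ {g : G | d 1 g ≤ r} := by
    simpa [(hdeq 1 1).mpr rfl] using hr
  set S := (hdproper r).toFinset with hS
  have hSne : S.Nonempty := ⟨1, by simp [hS, h1mem]⟩
  refine ⟨S.sup' hSne (fun g => d' 1 (f g)), ?_⟩
  intro x hx y hy hxy
  have hg : x⁻¹ * y ∈ X * X := by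
    have hxinv : x⁻¹ ∈ X := by
      rw [← hXinv]; exact Set.inv_mem_inv.mpr hx
    exact Set.mul_mem_mul hxinv hy
  have hxXX : x ∈ X * X := by
    simpa using Set.mul_mem_mul hx hX1
  have hyXX : y ∈ X * X := by
    simpa using Set.mul_mem_mul hy hX1
  have hprod : x * (x⁻¹ * y) = y := by group
  have hfy : f y = f x * f (x⁻¹ * y) := by
    have := hhom x hxXX (x⁻¹ * y) hg (by rw [hprod]; exact hyXX)
    rw [hprod] at this; exact this
  have hd1 : d 1 (x⁻¹ * y) ≤ r := by
    have := hdinv x 1 (x⁻¹ * y)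
    rw [mul_one, hprod] at this
    rw [← this]; exact hxy
  have hmemS : x⁻¹ * y ∈ S := by simp [hS, hd1]
  calc d' (f x) (f y) = d' (f x * 1) (f x * f (x⁻¹ * y)) := by rw [mul_one, hfy]
    _ = d' 1 (f (x⁻¹ * y)) := hd'inv _ _ _
    _ ≤ S.sup' hSne (fun g => d' 1 (f g)) := Finset.le_sup' (fun g => d' 1 (f g)) hmemS
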